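/- For every integer d ≥ 1, setting c(d) = ∑_{j=0}^{d} C(d,j)·b(j)·b(d−j), there exists a polynomial q with real coefficients such that for every integer n ≥ 0, ∑_{k=0}^{n−1} (k^d − c(d))·2^k/k! = q(n)·2^n/n! − q(0). -/

import Mathlib

/-- The Bell numbers: `bell 0 = 1` and `bell (d+1) = ∑_{j=0}^{d} C(d,j) * bell j`. -/
def bell : ℕ → ℕ
  | 0 => 1
  | d + 1 => ∑ j ∈ (Finset.range (d + 1)).attach, Nat.choose d j.1 * bell j.1
  decreasing_by exact Finset.mem_range.mp j.2

open Finset Polynomial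

lemma bell_zero : bell 0 = 1 := by rw [bell]

lemma bell_succ (d : ℕ) :
    bell (d + 1) = ∑ j ∈ Finset.range (d + 1), Nat.choose d j * bell j := by
  rw [bell]
  exact Finset.sum_attach (Finset.range (d + 1)) (fun j => Nat.choose d j * bell j)

/-- binomial self-convolution of the Bell numbers -/
def cNat (d : ℕ) : ℕ := ∑ j ∈ Finset.range (d + 1), Nat.choose d j * bell j * bell (d - j)

lemma cNat_zero : cNat 0 = 1 := by simp [cNat, bell_zero]

/-- triangular sum exchange -/
lemma tri {M : Type*} [AddCommMonoid M] (n : ℕ) (F : ℕ → ℕ → M) :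
    ∑ i ∈ Finset.range n, ∑ k ∈ Finset.range (i + 1), F i k
      = ∑ k ∈ Finset.range n, ∑ m ∈ Finset.range (n - k), F (k + m) k := by
  have h1 : ∀ i ∈ Finset.range n, ∑ k ∈ Finset.range (i + 1), F i k
      = ∑ k ∈ Finset.range n, if k ≤ i then F i k else 0 := by
    intro i hi
    rw [← Finset.sum_filter]
    apply Finset.sum_congr _ (fun _ _ => rfl)
    ext k
    simp only [Finset.mem_range, Finset.mem_filter, Nat.lt_succ_iff]
    have := Finset.mem_range.mp hi
    omega
  rw [Finset.sum_congr rfl h1, Finset.sum_comm]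
  apply Finset.sum_congr rfl
  intro k hk
  rw [← Finset.sum_filter]
  have h2 : (Finset.range n).filter (fun i => k ≤ i) = Finset.Ico k n := by
    ext i; simp [Finset.mem_filter, Finset.mem_Ico, and_comm]
  rw [h2, Finset.sum_Ico_eq_sum_range]

lemma refl2 (e : ℕ) :
    ∑ m ∈ Finset.range (e + 1), e.choose m * bell (e - m)
      = ∑ m ∈ Finset.range (e + 1), e.choose m * bell m := by
  rw [← Finset.sum_range_reflect]
  apply Finset.sum_congr rfl
  intro m hm
  have hm' : m ≤ e := by simpa [Nat.lt_succ_iff] using hm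
  have h1 : e + 1 - 1 - m = e - m := by omega
  have h2 : e - (e - m) = m := by omega
  rw [h1, Nat.choose_symm hm', h2]

lemma cNat_succ (d : ℕ) :
    cNat (d + 1) = 2 * ∑ j ∈ Finset.range (d + 1), Nat.choose d j * cNat j := by
  have A := ∑ i ∈ Finset.range (d + 1), d.choose i * bell (i + 1) * bell (d - i)
  -- Step 1: cNat (d+1) = A + B
  have step1 : cNat (d + 1)
      = (∑ i ∈ Finset.range (d + 1), d.choose i * bell (i + 1) * bell (d - i))
        + ∑ i ∈ Finset.range (d + 1), d.choose i * bell i * bell (d + 1 - i) := by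
    have hB : ∑ i ∈ Finset.range (d + 1), d.choose i * bell i * bell (d + 1 - i)
        = (∑ i ∈ Finset.range (d + 1), d.choose (i + 1) * bell (i + 1) * bell (d - i))
          + bell (d + 1) := by
      have h := Finset.sum_range_succ'
        (fun i => d.choose i * bell i * bell (d + 1 - i)) (d + 1)
      have h2 : ∑ i ∈ Finset.range (d + 2), d.choose i * bell i * bell (d + 1 - i)
          = ∑ i ∈ Finset.range (d + 1), d.choose i * bell i * bell (d + 1 - i) := by
        rw [Finset.sum_range_succ]
        simp [Nat.choose_succ_self]
      rw [← h2, h]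
      simp [bell_zero, Nat.succ_sub_succ]
    rw [cNat]
    rw [Finset.sum_range_succ' (fun i => (d+1).choose i * bell i * bell (d + 1 - i)) (d + 1)]
    simp only [Nat.succ_sub_succ, Nat.choose_succ_succ, Nat.choose_zero_right, one_mul,
      Nat.sub_zero, add_mul]
    rw [Finset.sum_add_distrib, hB, bell_zero]
    ring
  -- Step 2: B = A by reflection
  have step2 : ∑ i ∈ Finset.range (d + 1), d.choose i * bell i * bell (d + 1 - i)
      = ∑ i ∈ Finset.range (d + 1), d.choose i * bell (i + 1) * bell (d - i) := by
    rw [← Finset.sum_range_reflect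
      (fun i => d.choose i * bell i * bell (d + 1 - i)) (d + 1)]
    apply Finset.sum_congr rfl
    intro i hi
    have hi' : i ≤ d := by simpa [Nat.lt_succ_iff] using hi
    have h1 : d + 1 - 1 - i = d - i := by omega
    have h2 : d + 1 - (d - i) = i + 1 := by omega
    rw [h1, Nat.choose_symm hi', h2]
    ring
  -- Step 3: A = ∑ C(d,j) cNat j
  have step3 : ∑ i ∈ Finset.range (d + 1), d.choose i * bell (i + 1) * bell (d - i)
      = ∑ j ∈ Finset.range (d + 1), d.choose j * cNat j := by
    have lhs : ∑ i ∈ Finset.range (d + 1), d.choose i * bell (i + 1) * bell (d - i)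
        = ∑ i ∈ Finset.range (d + 1), ∑ k ∈ Finset.range (i + 1),
            d.choose i * i.choose k * bell k * bell (d - i) := by
      apply Finset.sum_congr rfl
      intro i _
      rw [bell_succ, Finset.mul_sum, Finset.sum_mul]
      apply Finset.sum_congr rfl
      intro k _
      ring
    have rhs : ∑ j ∈ Finset.range (d + 1), d.choose j * cNat j
        = ∑ j ∈ Finset.range (d + 1), ∑ k ∈ Finset.range (j + 1),
            d.choose j * j.choose k * bell k * bell (j - k) := by
      apply Finset.sum_congr rfl
      intro j _
      rw [cNat, Finset.mul_sum]
      apply Finset.sum_congr rfl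
      intro k _
      ring
    rw [lhs, rhs, tri, tri]
    apply Finset.sum_congr rfl
    intro k hk
    have hk' : k ≤ d := by simpa [Nat.lt_succ_iff] using hk
    have trin : ∀ m ∈ Finset.range (d + 1 - k),
        d.choose (k + m) * (k + m).choose k = d.choose k * (d - k).choose m := by
      intro m hm
      have hm' : k + m ≤ d := by
        have := Finset.mem_range.mp hm; omega
      have := Nat.choose_mul (n := d) (k := k + m) (s := k) (Nat.le_add_right k m)
      simpa using this
    have e1 : ∑ m ∈ Finset.range (d + 1 - k),
          d.choose (k + m) * (k + m).choose k * bell k * bell (d - (k + m))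
        = d.choose k * bell k *
          ∑ m ∈ Finset.range (d - k + 1), (d - k).choose m * bell (d - k - m) := by
      rw [Finset.mul_sum]
      have hrange : d + 1 - k = d - k + 1 := by omega
      rw [← hrange]
      apply Finset.sum_congr rfl
      intro m hm
      rw [trin m hm]
      have : d - (k + m) = d - k - m := by omega
      rw [this]
      ring
    have e2 : ∑ m ∈ Finset.range (d + 1 - k),
          d.choose (k + m) * (k + m).choose k * bell k * bell ((k + m) - k)
        = d.choose k * bell k *
          ∑ m ∈ Finset.range (d - k + 1), (d - k).choose m * bell m := by
      rw [Finset.mul_sum]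
      have hrange : d + 1 - k = d - k + 1 := by omega
      rw [← hrange]
      apply Finset.sum_congr rfl
      intro m hm
      rw [trin m hm]
      have : k + m - k = m := by omega
      rw [this]
      ring
    rw [e1, e2, refl2]
  rw [step1, step2, step3]
  ring

/-- partial sums -/
noncomputable def S (d n : ℕ) : ℝ :=
  ∑ k ∈ Finset.range n, (k : ℝ) ^ d * 2 ^ k / (Nat.factorial k : ℝ)

/-- the polynomials -/
noncomputable def qq : ℕ → Polynomial ℝ
  | 0 => 0
  | d + 1 => Polynomial.X *
      ((∑ j ∈ (Finset.range (d + 1)).attach,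
          Polynomial.C ((Nat.choose d j.1 : ℝ)) * qq j.1).comp
        (Polynomial.X - Polynomial.C 1) - Polynomial.C ((cNat (d + 1) : ℝ) / 2))
  decreasing_by exact Finset.mem_range.mp j.2

lemma qq_succ (d : ℕ) : qq (d + 1) = Polynomial.X *
      ((∑ j ∈ Finset.range (d + 1), Polynomial.C ((Nat.choose d j : ℝ)) * qq j).comp
        (Polynomial.X - Polynomial.C 1) - Polynomial.C ((cNat (d + 1) : ℝ) / 2)) := by
  rw [qq, Finset.sum_attach (Finset.range (d + 1))
      (fun j => Polynomial.C ((Nat.choose d j : ℝ)) * qq j)]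

lemma qq_eval_succ (d : ℕ) (x : ℝ) : (qq (d + 1)).eval x
    = x * ((∑ j ∈ Finset.range (d + 1), (Nat.choose d j : ℝ) * (qq j).eval (x - 1))
        - (cNat (d + 1) : ℝ) / 2) := by
  rw [qq_succ]
  simp [Polynomial.eval_comp, Polynomial.eval_finset_sum]

lemma qq_zero : qq 0 = 0 := by rw [qq]

lemma qq_eval_zero (d : ℕ) : (qq d).eval 0 = 0 := by
  cases d with
  | zero => simp [qq_zero]
  | succ d => rw [qq_eval_succ]; ring

lemma shift (d n : ℕ) :
    S (d + 1) (n + 1) = 2 * ∑ j ∈ Finset.range (d + 1), (Nat.choose d j : ℝ) * S j n := by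
  unfold S
  rw [Finset.sum_range_succ']
  have h0 : ((0 : ℕ) : ℝ) ^ (d + 1) * 2 ^ (0:ℕ) / (Nat.factorial 0 : ℝ) = 0 := by
    simp
  rw [h0, add_zero]
  have key : ∀ i : ℕ, ((i + 1 : ℕ) : ℝ) ^ (d + 1) * 2 ^ (i + 1) / (Nat.factorial (i + 1) : ℝ)
      = ∑ j ∈ Finset.range (d + 1),
          (Nat.choose d j : ℝ) * (2 * ((i : ℝ) ^ j * 2 ^ i / (Nat.factorial i : ℝ))) := by
    intro i
    have hf : ((Nat.factorial i : ℝ)) ≠ 0 := Nat.cast_ne_zero.mpr (Nat.factorial_ne_zero i)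
    have hx : ((i : ℝ) + 1) ≠ 0 := by positivity
    have hb : ((i : ℝ) + 1) ^ d = ∑ j ∈ Finset.range (d + 1), (i : ℝ) ^ j * (Nat.choose d j : ℝ) := by
      have := add_pow (i : ℝ) 1 d
      simpa using this
    have step : ((i + 1 : ℕ) : ℝ) ^ (d + 1) * 2 ^ (i + 1) / (Nat.factorial (i + 1) : ℝ)
        = ((i : ℝ) + 1) ^ d * (2 * (2 ^ i / (Nat.factorial i : ℝ))) := by
      rw [Nat.factorial_succ]
      push_cast
      rw [pow_succ]
      field_simp
      ring
    rw [step, hb, Finset.sum_mul]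
    apply Finset.sum_congr rfl
    intro j _
    ring
  rw [Finset.sum_congr rfl (fun i _ => key i), Finset.sum_comm, Finset.mul_sum]
  apply Finset.sum_congr rfl
  intro j _
  rw [Finset.mul_sum, Finset.mul_sum]
  apply Finset.sum_congr rfl
  intro i _
  ring

lemma main (d : ℕ) : ∀ n : ℕ,
    S d n = (qq d).eval (n : ℝ) * 2 ^ n / (Nat.factorial n : ℝ) + (cNat d : ℝ) * S 0 n := by
  induction d using Nat.strong_induction_on with
  | _ d ih =>
    match d with
    | 0 =>
      intro n
      simp [qq_zero, cNat_zero]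
    | d + 1 =>
      intro n
      cases n with
      | zero =>
        simp [S, qq_eval_zero]
      | succ n =>
        have hf : ((Nat.factorial n : ℝ)) ≠ 0 := Nat.cast_ne_zero.mpr (Nat.factorial_ne_zero n)
        have hx : ((n : ℝ) + 1) ≠ 0 := by positivity
        have hIH : ∀ j ∈ Finset.range (d + 1),
            (Nat.choose d j : ℝ) * S j n = (Nat.choose d j : ℝ) *
              ((qq j).eval (n : ℝ) * 2 ^ n / (Nat.factorial n : ℝ) + (cNat j : ℝ) * S 0 n) := by
          intro j hj
          rw [ih j (Finset.mem_range.mp hj) n]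
        have hc : (cNat (d + 1) : ℝ)
            = 2 * ∑ j ∈ Finset.range (d + 1), (Nat.choose d j : ℝ) * (cNat j : ℝ) := by
          have := cNat_succ d
          push_cast [this]
          ring
        have heval : (qq (d + 1)).eval ((n + 1 : ℕ) : ℝ)
            = ((n : ℝ) + 1) * ((∑ j ∈ Finset.range (d + 1),
                (Nat.choose d j : ℝ) * (qq j).eval (n : ℝ)) - (cNat (d + 1) : ℝ) / 2) := by
          rw [qq_eval_succ]
          push_cast
          ring_nf
        have hE : S 0 (n + 1) = S 0 n + 2 ^ n / (Nat.factorial n : ℝ) := by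
          unfold S
          rw [Finset.sum_range_succ]
          simp
        have expand : ∑ j ∈ Finset.range (d + 1), (Nat.choose d j : ℝ) *
              ((qq j).eval (n : ℝ) * 2 ^ n / (Nat.factorial n : ℝ) + (cNat j : ℝ) * S 0 n)
            = (∑ j ∈ Finset.range (d + 1), (Nat.choose d j : ℝ) * (qq j).eval (n : ℝ))
                * (2 ^ n / (Nat.factorial n : ℝ))
              + (∑ j ∈ Finset.range (d + 1), (Nat.choose d j : ℝ) * (cNat j : ℝ)) * S 0 n := by
          rw [Finset.sum_mul, Finset.sum_mul, ← Finset.sum_add_distrib]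
          apply Finset.sum_congr rfl
          intro j _
          ring
        rw [shift, Finset.sum_congr rfl hIH, expand, heval, hE, hc, Nat.factorial_succ]
        push_cast
        field_simp
        ring

theorem stmt_17 (d : ℕ) (hd : 1 ≤ d) :
    ∃ q : Polynomial ℝ, ∀ n : ℕ,
      ∑ k ∈ Finset.range n,
          (((k : ℝ) ^ d -
              ∑ j ∈ Finset.range (d + 1),
                (Nat.choose d j : ℝ) * (bell j : ℝ) * (bell (d - j) : ℝ)) *
            2 ^ k / (Nat.factorial k : ℝ)) =
        q.eval (n : ℝ) * 2 ^ n / (Nat.factorial n : ℝ) - q.eval 0 := by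
  refine ⟨qq d, fun n => ?_⟩
  have hcR : ∑ j ∈ Finset.range (d + 1),
      (Nat.choose d j : ℝ) * (bell j : ℝ) * (bell (d - j) : ℝ) = (cNat d : ℝ) := by
    rw [cNat]
    push_cast
    ring
  have split : ∑ k ∈ Finset.range n,
        (((k : ℝ) ^ d - (cNat d : ℝ)) * 2 ^ k / (Nat.factorial k : ℝ))
      = S d n - (cNat d : ℝ) * S 0 n := by
    unfold S
    rw [Finset.mul_sum, ← Finset.sum_sub_distrib]
    apply Finset.sum_congr rfl
    intro k _
    rw [pow_zero]
    ring
  rw [hcR, split, main d n, qq_eval_zero d]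
  ring
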